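/- For minimum normality: for every ε > 0 and all sufficiently large N, every binary sequence E_N ∈ {-1,1}^N satisfies 𝒩(E_N) ≥ (1/2 − ε)·log₂ N. (Lower bound half of the Alon–Kohayakawa–Mauduit–Moreira–Rödl estimate.) -/
import Mathlib

set_option maxHeartbeats 1000000


def patCount (e : ℕ → Bool) (M : ℕ) {k : ℕ} (X : Fin k → Bool) : ℕ :=
  ((Finset.range M).filter (fun n => ∀ i : Fin k, e (n + i) = X i)).card

private lemma aux1 (n : ℕ) (hn : 3 ≤ n) : 2 * n + 1 ≤ 2 ^ n := by
  induction n with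
  | zero => omega
  | succ m ih =>
    rcases Nat.lt_or_ge m 3 with h | h
    · have hm : m = 2 := by omega
      subst hm; norm_num
    · have h1 := ih h
      have h2 : (1:ℕ) ≤ 2 ^ m := Nat.one_le_two_pow
      rw [pow_succ]
      omega

private lemma aux2 (n : ℕ) (hn : 4 ≤ n) : n * n ≤ 2 ^ n := by
  induction n with
  | zero => omega
  | succ m ih =>
    rcases Nat.lt_or_ge m 4 with h | h
    · have hm : m = 3 := by omega
      subst hm; norm_num
    · have h1 := ih h
      have h2 := aux1 m (by omega)
      rw [pow_succ]
      nlinarith [h1, h2]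

private lemma aux3 (n : ℕ) (hn : 1 ≤ n) : n ≤ 2 ^ (n - 1) := by
  rcases Nat.lt_or_ge n 3 with h | h
  · interval_cases n <;> norm_num
  · have h1 := aux1 n (by omega)
    obtain ⟨m, rfl⟩ : ∃ m, n = m + 1 := ⟨n - 1, by omega⟩
    simp only [Nat.add_sub_cancel]
    rw [pow_succ] at h1
    omega

private lemma patCount_run (e : ℕ → Bool) {k : ℕ} (X : Fin k → Bool) (a b : ℕ)
    (hab : a ≤ b) (h : ∀ n, a ≤ n → n < b → ∀ i : Fin k, e (n + i) = X i) :
    patCount e a X + (b - a) ≤ patCount e b X := by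
  classical
  have hsub : ((Finset.range a).filter (fun n => ∀ i : Fin k, e (n + i) = X i)) ∪ Finset.Ico a b
      ⊆ (Finset.range b).filter (fun n => ∀ i : Fin k, e (n + i) = X i) := by
    intro n hn
    rcases Finset.mem_union.mp hn with hn | hn
    · obtain ⟨hn1, hn2⟩ := Finset.mem_filter.mp hn
      exact Finset.mem_filter.mpr
        ⟨Finset.mem_range.mpr (lt_of_lt_of_le (Finset.mem_range.mp hn1) hab), hn2⟩
    · obtain ⟨hn1, hn2⟩ := Finset.mem_Ico.mp hn
      exact Finset.mem_filter.mpr ⟨Finset.mem_range.mpr hn2, h n hn1 hn2⟩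
  have hdisj : Disjoint
      ((Finset.range a).filter (fun n => ∀ i : Fin k, e (n + i) = X i)) (Finset.Ico a b) := by
    rw [Finset.disjoint_left]
    intro n hn hn'
    have h1 := Finset.mem_range.mp (Finset.mem_filter.mp hn).1
    have h2 := (Finset.mem_Ico.mp hn').1
    omega
  have hcard := Finset.card_le_card hsub
  rw [Finset.card_union_of_disjoint hdisj, Nat.card_Ico] at hcard
  exact hcard

/-- For every `ε > 0` and all sufficiently large `N`, every binary sequence of
length `N` has normality measure at least `(1/2 − ε) log₂ N`: there is an
admissible `(k, X, M)` witnessing `|T(E_N,M,X) − M/2^k| ≥ (1/2 − ε) log₂ N`. -/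
theorem stmt17 (ε : ℝ) (hε : 0 < ε) :
    ∃ N₀ : ℕ, ∀ N ≥ N₀, ∀ e : ℕ → Bool,
      ∃ (k M : ℕ) (X : Fin k → Bool),
        1 ≤ k ∧ (k : ℝ) ≤ Real.logb 2 N ∧ 1 ≤ M ∧ M + k ≤ N + 1 ∧
        (1 / 2 - ε) * Real.logb 2 N ≤ |(patCount e M X : ℝ) - (M : ℝ) / 2 ^ k| := by
  classical
  rcases le_or_gt (1/2 : ℝ) ε with hhalf | hhalf
  · -- trivial case : the target is nonpositive
    refine ⟨2, fun N hN e => ⟨1, 1, fun _ => false, le_refl 1, ?_, le_refl 1, by omega, ?_⟩⟩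
    · have h2 : (2:ℝ) ≤ (N:ℝ) := by exact_mod_cast hN
      have h1 : (1:ℝ) ≤ Real.logb 2 N := by
        calc (1:ℝ) = Real.logb 2 2 := (Real.logb_self_eq_one (by norm_num)).symm
          _ ≤ Real.logb 2 N := Real.logb_le_logb_of_le (by norm_num) (by norm_num) h2
      exact_mod_cast h1
    · have hN1 : (1:ℝ) ≤ (N:ℝ) := by
        have : (2:ℕ) ≤ N := hN
        exact_mod_cast le_trans (by norm_num) this
      have hl : 0 ≤ Real.logb 2 N := Real.logb_nonneg (by norm_num) hN1
      have h0 : (1/2 - ε) * Real.logb 2 N ≤ 0 :=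
        mul_nonpos_of_nonpos_of_nonneg (by linarith) hl
      exact h0.trans (abs_nonneg _)
  · -- main case
    obtain ⟨c, hc⟩ := exists_nat_ge (3 / ε)
    refine ⟨2 ^ (max 100 ((c+1)*(c+1))), fun N hN e => ?_⟩
    set K := Nat.log 2 N with hKdef
    have hKK₀ : max 100 ((c+1)*(c+1)) ≤ K := by
      have h := Nat.log_mono_right (b := 2) hN
      rwa [Nat.log_pow (by norm_num)] at h
    have hK100 : 100 ≤ K := le_trans (le_max_left _ _) hKK₀
    have hKc : (c+1)*(c+1) ≤ K := le_trans (le_max_right _ _) hKK₀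
    have hN0 : N ≠ 0 := by
      intro h
      rw [h] at hN
      have := Nat.one_le_two_pow (n := max 100 ((c+1)*(c+1)))
      omega
    have h2K : 2 ^ K ≤ N := Nat.pow_log_le_self 2 hN0
    have hN2 : N < 2 ^ (K + 1) := Nat.lt_pow_succ_log_self (by norm_num) N
    have hKN : K ≤ N := Nat.log_le_self 2 N
    set t := Nat.log 2 K with htdef
    have h2t : 2 ^ t ≤ K := Nat.pow_log_le_self 2 (by omega)
    have hK2t : K < 2 ^ (t + 1) := Nat.lt_pow_succ_log_self (by norm_num) K
    have ht6 : 6 ≤ t := by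
      have h64 : (2:ℕ)^6 ≤ K := by norm_num; omega
      have h := Nat.log_mono_right (b := 2) h64
      rwa [Nat.log_pow (by norm_num)] at h
    set r := Nat.sqrt K with hrdef
    have hrr : r * r ≤ K := Nat.sqrt_le K
    have hrc : c + 1 ≤ r := Nat.le_sqrt.mpr hKc
    have hr10 : 10 ≤ r := Nat.le_sqrt.mpr (by omega)
    have htr : t ≤ r := Nat.le_sqrt.mpr (le_trans (aux2 t (by omega)) h2t)
    have htK : 2*t + 5 ≤ K := by
      have h1 : 10 * r ≤ r * r := Nat.mul_le_mul_right r hr10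
      calc 2*t + 5 ≤ 2*r + 5 := by omega
        _ ≤ 10*r := by omega
        _ ≤ r*r := h1
        _ ≤ K := hrr
    set j := K - (t + 2) with hjdef
    have hjl : t + 1 ≤ j := by omega
    have hj1 : 1 ≤ j := by omega
    have hjK : j ≤ K := by omega
    have hjN : j ≤ N := le_trans hjK hKN
    -- logb bounds
    have hNR1 : (1:ℝ) ≤ (N:ℝ) := by exact_mod_cast Nat.one_le_iff_ne_zero.mpr hN0
    have e1 : Real.logb 2 ((2:ℝ)^K) = (K:ℝ) := by
      rw [Real.logb_pow, Real.logb_self_eq_one (by norm_num)]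
      ring
    have e2 : Real.logb 2 ((2:ℝ)^(K+1)) = (K:ℝ) + 1 := by
      rw [Real.logb_pow, Real.logb_self_eq_one (by norm_num)]
      push_cast
      ring
    have hlogb_ge : (K:ℝ) ≤ Real.logb 2 N := by
      have h : ((2:ℝ))^K ≤ (N:ℝ) := by exact_mod_cast h2K
      rw [← e1]
      exact Real.logb_le_logb_of_le (by norm_num) (by positivity) h
    have hlogb_le : Real.logb 2 N ≤ (K:ℝ) + 1 := by
      have h : (N:ℝ) ≤ (2:ℝ)^(K+1) := by exact_mod_cast hN2.le
      rw [← e2]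
      exact Real.logb_le_logb_of_le (by norm_num) (by linarith) h
    have hlogb_pos : 0 < Real.logb 2 N := by
      have : (0:ℝ) < (K:ℝ) := by exact_mod_cast Nat.lt_of_lt_of_le (by norm_num) hK100
      linarith
    by_cases hA : patCount e (N + 1 - j) (fun _ : Fin j => false) = 0
    · -- Case A : the all-false word of length j never occurs
      refine ⟨j, N + 1 - j, fun _ => false, hj1, ?_, by omega, by omega, ?_⟩
      · have : (j:ℝ) ≤ (K:ℝ) := by exact_mod_cast hjK
        linarith
      · rw [hA]
        have h2jpos : (0:ℝ) < 2^j := by positivity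
        have habs : |((0:ℕ):ℝ) - ((N + 1 - j : ℕ):ℝ)/2^j| = ((N + 1 - j : ℕ):ℝ)/2^j := by
          push_cast
          rw [zero_sub, abs_neg, abs_of_nonneg (by positivity)]
        rw [habs]
        -- key natural-number inequality
        have hnat : 2^j * (K+1) ≤ N + 1 - j := by
          have s1 : 2^j * (K+1) ≤ 2^j * 2^(t+1) :=
            Nat.mul_le_mul_left _ hK2t
          have s2 : 2^j * 2^(t+1) = 2^(K-1) := by
            rw [← pow_add]
            congr 1
            omega
          have s3 : K ≤ 2^(K-1) := aux3 K (by omega)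
          have s4 : 2^(K-1) * 2 = 2^K := by
            rw [← pow_succ]
            congr 1
            omega
          omega
        have hstep : ((2:ℝ)^j) * ((K:ℝ)+1) ≤ ((N + 1 - j : ℕ):ℝ) := by
          have := hnat
          exact_mod_cast this
        have hKdiv : ((K:ℝ)+1) ≤ ((N + 1 - j : ℕ):ℝ)/2^j := by
          rw [le_div_iff₀ h2jpos]
          linarith
        have hml : (1/2 - ε) * Real.logb 2 N ≤ (1/2) * Real.logb 2 N := by
          have := mul_nonneg hε.le hlogb_pos.le
          linarith
        linarith
    · -- Case B : it occurs at some p; inside its occurrence the all-false word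
      -- of length t+1 occurs at every position
      have hpos : 0 < patCount e (N + 1 - j) (fun _ : Fin j => false) :=
        Nat.pos_of_ne_zero hA
      rw [patCount, Finset.card_pos] at hpos
      obtain ⟨p, hp⟩ := hpos
      obtain ⟨hp1, hp2⟩ := Finset.mem_filter.mp hp
      have hpM : p < N + 1 - j := Finset.mem_range.mp hp1
      have hrun : ∀ n, p ≤ n → n < p + (j - (t+1)) + 1 → ∀ i : Fin (t+1),
          e (n + (i:ℕ)) = false := by
        intro n hn1 hn2 i
        have hi : (i:ℕ) < t + 1 := i.isLt
        have hlt : (n - p) + (i:ℕ) < j := by omega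
        have h3 : e (p + ((n - p) + (i:ℕ))) = false := hp2 ⟨(n - p) + (i:ℕ), hlt⟩
        rwa [show p + ((n - p) + (i:ℕ)) = n + (i:ℕ) from by omega] at h3
      have hcount := patCount_run e (fun _ : Fin (t+1) => false) p (p + (j - (t+1)) + 1)
        (by omega) hrun
      have hcount' : patCount e p (fun _ : Fin (t+1) => false) + ((j - (t+1)) + 1)
          ≤ patCount e (p + (j - (t+1)) + 1) (fun _ : Fin (t+1) => false) := by
        have heq : (p + (j - (t+1)) + 1) - p = (j - (t+1)) + 1 := by omega
        rwa [heq] at hcount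
      set L := Real.logb 2 N with hLdef
      set d : ℝ := ((j - (t+1) : ℕ) : ℝ) + 1 with hddef
      have hdval : d = (K:ℝ) - (2*(t:ℝ) + 2) := by
        have h0 : (j - (t+1)) + 1 + (2*t + 2) = K := by omega
        have h1 : ((j - (t+1) : ℕ) : ℝ) + 1 + (2*(t:ℝ) + 2) = (K:ℝ) := by
          exact_mod_cast h0
        rw [hddef]
        linarith
      have hpow : (j - (t+1)) + 1 ≤ 2 ^ (t+1) := by
        have : (j - (t+1)) + 1 ≤ K := by omega
        omega
      have hd_div : d / 2^(t+1) ≤ 1 := by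
        rw [div_le_one (by positivity)]
        rw [hddef]
        exact_mod_cast hpow
      have hd_div_nonneg : 0 ≤ d / 2^(t+1) := by
        rw [hddef]
        positivity
      -- the key numeric inequality
      have htK2 : (t:ℝ) + 2 ≤ ε * K := by
        have c1 : (3:ℝ) ≤ ε * c := by
          have := (div_le_iff₀ hε).mp hc
          linarith
        have c2 : (c:ℝ) ≤ (r:ℝ) := by
          have : c ≤ r := by omega
          exact_mod_cast this
        have c3 : (t:ℝ) ≤ (r:ℝ) := by exact_mod_cast htr
        have c4 : (10:ℝ) ≤ (r:ℝ) := by exact_mod_cast hr10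
        have c5 : (r:ℝ) * (r:ℝ) ≤ (K:ℝ) := by exact_mod_cast hrr
        calc (t:ℝ) + 2 ≤ (r:ℝ) + 2*1 := by linarith
          _ ≤ (r:ℝ) + 2*(r:ℝ) := by linarith
          _ = 3*(r:ℝ) := by ring
          _ ≤ (ε*c)*(r:ℝ) := mul_le_mul_of_nonneg_right c1 (by linarith)
          _ ≤ (ε*(r:ℝ))*(r:ℝ) :=
              mul_le_mul_of_nonneg_right (mul_le_mul_of_nonneg_left c2 hε.le) (by linarith)
          _ = ε*((r:ℝ)*(r:ℝ)) := by ring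
          _ ≤ ε*(K:ℝ) := mul_le_mul_of_nonneg_left c5 hε.le
      have hKey : 2 * ((1/2 - ε) * L) ≤ d - d / 2^(t+1) := by
        have m1 : (1 - 2*ε) * L ≤ (1 - 2*ε) * ((K:ℝ)+1) :=
          mul_le_mul_of_nonneg_left hlogb_le (by linarith)
        linarith [m1, hd_div, htK2, hdval]
      -- count inequality in ℝ
      have hcast : (patCount e p (fun _ : Fin (t+1) => false) : ℝ) + d
          ≤ (patCount e (p + (j - (t+1)) + 1) (fun _ : Fin (t+1) => false) : ℝ) := by
        rw [hddef]
        exact_mod_cast hcount'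
      have hb_cast : ((p + (j - (t+1)) + 1 : ℕ):ℝ) = (p:ℝ) + d := by
        rw [hddef]
        push_cast
        ring
      have h5 : ((p + (j - (t+1)) + 1 : ℕ):ℝ)/2^(t+1) = (p:ℝ)/2^(t+1) + d/2^(t+1) := by
        rw [hb_cast]
        ring
      set Ar : ℝ := (patCount e p (fun _ : Fin (t+1) => false) : ℝ) - (p:ℝ)/2^(t+1) with hArdef
      set Br : ℝ := (patCount e (p + (j - (t+1)) + 1) (fun _ : Fin (t+1) => false) : ℝ)
          - ((p + (j - (t+1)) + 1 : ℕ):ℝ)/2^(t+1) with hBrdef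
      clear_value d Ar Br
      have hBA : d - d/2^(t+1) ≤ Br - Ar := by
        rw [hArdef, hBrdef]
        linarith [hcast, h5]
      have hcle : ((t:ℝ)+1) ≤ L := by
        have : (t:ℝ) + 1 ≤ (K:ℝ) := by
          have : t + 1 ≤ K := by omega
          exact_mod_cast this
        linarith
      by_cases hBr : (1/2 - ε) * L ≤ |Br|
      · refine ⟨t+1, p + (j - (t+1)) + 1, fun _ => false, by omega, ?_, by omega, by omega, ?_⟩
        · push_cast
          linarith
        · rw [← hBrdef]
          exact hBr
      · push_neg at hBr
        have hTgpos : 0 < (1/2 - ε) * L := mul_pos (by linarith) hlogb_pos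
        have hAr_neg : Ar ≤ -((1/2 - ε) * L) := by
          have hBle : Br ≤ |Br| := le_abs_self Br
          linarith
        have hp_pos : 1 ≤ p := by
          rcases Nat.eq_zero_or_pos p with hp0 | hp0
          · exfalso
            have hz : patCount e p (fun _ : Fin (t+1) => false) = 0 := by
              rw [hp0]
              simp [patCount]
            have : Ar = 0 - (p:ℝ)/2^(t+1) := by rw [hArdef, hz]; norm_num
            rw [hp0] at this
            simp at this
            rw [this] at hAr_neg
            linarith
          · exact hp0
        refine ⟨t+1, p, fun _ => false, by omega, ?_, hp_pos, by omega, ?_⟩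
        · push_cast
          linarith
        · rw [← hArdef]
          have : (1/2 - ε) * L ≤ -Ar := by linarith
          exact le_abs.mpr (Or.inr this)
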